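/- (Jacobi / Desnanot–Jacobi determinant identity.) Let R be a commutative ring, n ≥ 2, and let D be an n×n matrix over R. Denote by D(i|j) the (n−1)×(n−1) matrix obtained from D by deleting row i and column j, and by D(n−1,n|n−1,n) the (n−2)×(n−2) matrix obtained by deleting rows n−1 and n and columns n−1 and n. Then det D(n−1|n−1) · det D(n|n) − det D(n−1|n) · det D(n|n−1) = det D(n−1,n|n−1,n) · det D. -/

import Mathlib

open Matrix

/-- Key identity: `det D` times the Desnanot–Jacobi LHS equals `det D` times the RHS,
over any commutative ring. -/
lemma dj_key (R : Type*) [CommRing R] (m : ℕ)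
    (D : Matrix (Fin (m + 2)) (Fin (m + 2)) R) :
    D.det * ((D.submatrix (Fin.succAbove ⟨m, Nat.lt_add_of_pos_right two_pos⟩) (Fin.succAbove ⟨m, Nat.lt_add_of_pos_right two_pos⟩)).det *
        (D.submatrix (Fin.succAbove ⟨m + 1, Nat.lt_add_one (m + 1)⟩) (Fin.succAbove ⟨m + 1, Nat.lt_add_one (m + 1)⟩)).det -
      (D.submatrix (Fin.succAbove ⟨m, Nat.lt_add_of_pos_right two_pos⟩) (Fin.succAbove ⟨m + 1, Nat.lt_add_one (m + 1)⟩)).det *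
        (D.submatrix (Fin.succAbove ⟨m + 1, Nat.lt_add_one (m + 1)⟩) (Fin.succAbove ⟨m, Nat.lt_add_of_pos_right two_pos⟩)).det)
    = D.det * ((D.submatrix (fun a : Fin m => (Fin.castLE (Nat.le_add_right m 2) a : Fin (m + 2)))
        (fun b : Fin m => (Fin.castLE (Nat.le_add_right m 2) b : Fin (m + 2)))).det * D.det) := by
  have hm : m < m + 2 := by omega
  have hm1 : m + 1 < m + 2 := by omega
  set k : Fin (m + 2) := ⟨m, hm⟩ with hk
  set l : Fin (m + 2) := ⟨m + 1, hm1⟩ with hl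
  set B := D.adjugate with hBdef
  set e := (finSumFinEquiv : Fin m ⊕ Fin 2 ≃ Fin (m + 2)) with he
  have he0 : e (Sum.inr 0) = k := by
    apply Fin.ext; simp [he, hk]
  have he1 : e (Sum.inr 1) = l := by
    apply Fin.ext; simp [he, hl]
  have hel : ∀ a : Fin m, e (Sum.inl a) = Fin.castLE (by omega) a := by
    intro a; apply Fin.ext; simp [he]
  -- adjugate entries vs minors
  have hkk : B k k = (D.submatrix k.succAbove k.succAbove).det := by
    rw [hBdef, Matrix.adjugate_fin_succ_eq_det_submatrix]
    have : ((k : ℕ) + (k : ℕ)) = m + m := rfl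
    rw [this, Even.neg_one_pow ⟨m, rfl⟩, one_mul]
  have hll : B l l = (D.submatrix l.succAbove l.succAbove).det := by
    rw [hBdef, Matrix.adjugate_fin_succ_eq_det_submatrix]
    have : ((l : ℕ) + (l : ℕ)) = (m + 1) + (m + 1) := rfl
    rw [this, Even.neg_one_pow ⟨m + 1, rfl⟩, one_mul]
  have hkl : B k l = -(D.submatrix l.succAbove k.succAbove).det := by
    rw [hBdef, Matrix.adjugate_fin_succ_eq_det_submatrix]
    have : ((l : ℕ) + (k : ℕ)) = 2 * m + 1 := by simp [hk, hl]; ring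
    rw [this, Odd.neg_one_pow ⟨m, rfl⟩, neg_one_mul]
  have hlk : B l k = -(D.submatrix k.succAbove l.succAbove).det := by
    rw [hBdef, Matrix.adjugate_fin_succ_eq_det_submatrix]
    have : ((k : ℕ) + (l : ℕ)) = 2 * m + 1 := by simp [hk, hl]; ring
    rw [this, Odd.neg_one_pow ⟨m, rfl⟩, neg_one_mul]
  -- the auxiliary block matrix
  set N : Matrix (Fin m ⊕ Fin 2) (Fin m ⊕ Fin 2) R :=
    Matrix.fromBlocks 1 (fun a b => B (e (Sum.inl a)) (e (Sum.inr b))) 0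
      (fun a b => B (e (Sum.inr a)) (e (Sum.inr b))) with hN
  have hdetN : N.det = B k k * B l l - B k l * B l k := by
    rw [hN]; erw [Matrix.det_fromBlocks_zero₂₁]; rw [Matrix.det_one, one_mul]; erw [Matrix.det_fin_two]
    simp only [he0, he1]
  have hDB : D * B = D.det • (1 : Matrix (Fin (m + 2)) (Fin (m + 2)) R) :=
    Matrix.mul_adjugate D
  have hprod : (D.submatrix e e) * N = Matrix.fromBlocks
      (fun a b => D (e (Sum.inl a)) (e (Sum.inl b))) 0
      (fun a b => D (e (Sum.inr a)) (e (Sum.inl b))) (D.det • (1 : Matrix (Fin 2) (Fin 2) R)) := by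
    have hcol : ∀ (i : Fin m ⊕ Fin 2) (b : Fin 2),
        ((D.submatrix e e) * N) i (Sum.inr b)
          = D.det * (1 : Matrix (Fin (m + 2)) (Fin (m + 2)) R) (e i) (e (Sum.inr b)) := by
      intro i b
      have : ((D.submatrix e e) * N) i (Sum.inr b)
          = ∑ y : Fin (m + 2), D (e i) y * B y (e (Sum.inr b)) := by
        rw [Matrix.mul_apply, ← Equiv.sum_comp e (fun y => D (e i) y * B y (e (Sum.inr b)))]
        refine Finset.sum_congr rfl fun x _ => ?_
        rcases x with a | a <;> simp [hN, Matrix.fromBlocks, Matrix.submatrix_apply]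
      rw [this, ← Matrix.mul_apply, hDB, Matrix.smul_apply, smul_eq_mul]
    ext i j
    rcases j with b | b
    · rcases i with a | a <;>
      · simp [hN, Matrix.mul_apply, Fintype.sum_sum_type, Matrix.fromBlocks,
          Matrix.one_apply, Finset.mul_sum, mul_ite, Finset.sum_ite_eq']
    · rw [hcol i b]
      rcases i with a | a <;>
        simp [Matrix.fromBlocks, Matrix.one_apply, e.injective.eq_iff, Matrix.smul_apply]
  have hdetP : (Matrix.fromBlocks
      (fun a b => D (e (Sum.inl a)) (e (Sum.inl b))) 0
      (fun a b => D (e (Sum.inr a)) (e (Sum.inl b)))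
      (D.det • (1 : Matrix (Fin 2) (Fin 2) R))).det
      = (D.submatrix (fun a : Fin m => (Fin.castLE (by omega) a : Fin (m + 2)))
        (fun b : Fin m => (Fin.castLE (by omega) b : Fin (m + 2)))).det * D.det ^ 2 := by
    erw [Matrix.det_fromBlocks_zero₁₂]
    have hP : (fun a b => D (e (Sum.inl a)) (e (Sum.inl b)))
        = D.submatrix (fun a : Fin m => (Fin.castLE (by omega) a : Fin (m + 2)))
          (fun b : Fin m => (Fin.castLE (by omega) b : Fin (m + 2))) := by
      funext a b
      rw [hel a, hel b]
      rfl
    rw [hP, Matrix.det_smul, Matrix.det_one, mul_one]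
    norm_num
  have hmain : D.det * N.det
      = (D.submatrix (fun a : Fin m => (Fin.castLE (by omega) a : Fin (m + 2)))
        (fun b : Fin m => (Fin.castLE (by omega) b : Fin (m + 2)))).det * D.det ^ 2 := by
    calc D.det * N.det = (D.submatrix e e).det * N.det := by
          rw [Matrix.det_submatrix_equiv_self]
      _ = ((D.submatrix e e) * N).det := (Matrix.det_mul _ _).symm
      _ = _ := by rw [hprod, hdetP]
  rw [← hkk, ← hll]
  have h2 : (D.submatrix k.succAbove l.succAbove).det * (D.submatrix l.succAbove k.succAbove).det
      = B k l * B l k := by rw [hkl, hlk]; ring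
  rw [h2, ← hdetN, hmain]
  ring


theorem desnanot_jacobi
    (R : Type*) [CommRing R] (m : ℕ)
    (D : Matrix (Fin (m + 2)) (Fin (m + 2)) R) :
    (D.submatrix (Fin.succAbove ⟨m, by omega⟩) (Fin.succAbove ⟨m, by omega⟩)).det *
        (D.submatrix (Fin.succAbove ⟨m + 1, by omega⟩) (Fin.succAbove ⟨m + 1, by omega⟩)).det -
      (D.submatrix (Fin.succAbove ⟨m, by omega⟩) (Fin.succAbove ⟨m + 1, by omega⟩)).det *
        (D.submatrix (Fin.succAbove ⟨m + 1, by omega⟩) (Fin.succAbove ⟨m, by omega⟩)).det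
    = (D.submatrix (fun a : Fin m => (Fin.castLE (by omega) a : Fin (m + 2)))
        (fun b : Fin m => (Fin.castLE (by omega) b : Fin (m + 2)))).det * D.det := by
  -- transfer from the generic matrix
  set X := Matrix.mvPolynomialX (Fin (m+2)) (Fin (m+2)) ℤ with hX
  have hgen :
      (X.submatrix (Fin.succAbove ⟨m, by omega⟩) (Fin.succAbove ⟨m, by omega⟩)).det *
        (X.submatrix (Fin.succAbove ⟨m + 1, by omega⟩) (Fin.succAbove ⟨m + 1, by omega⟩)).det -
      (X.submatrix (Fin.succAbove ⟨m, by omega⟩) (Fin.succAbove ⟨m + 1, by omega⟩)).det *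
        (X.submatrix (Fin.succAbove ⟨m + 1, by omega⟩) (Fin.succAbove ⟨m, by omega⟩)).det
      = (X.submatrix (fun a : Fin m => (Fin.castLE (by omega) a : Fin (m + 2)))
        (fun b : Fin m => (Fin.castLE (by omega) b : Fin (m + 2)))).det * X.det := by
    have h := dj_key _ m X
    exact mul_left_cancel₀ (Matrix.det_mvPolynomialX_ne_zero _ _) h
  have hmap : ((MvPolynomial.eval₂Hom (Int.castRingHom R)
      (fun p : Fin (m+2) × Fin (m+2) => D p.1 p.2)).mapMatrix X) = D := by
    rw [RingHom.mapMatrix_apply]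
    exact Matrix.mvPolynomialX_map_eval₂ (Int.castRingHom R) D
  rw [← hmap]
  simp only [RingHom.mapMatrix_apply, Matrix.submatrix_map]
  simp only [← RingHom.mapMatrix_apply, ← RingHom.map_det, ← _root_.map_mul, ← map_sub]
  exact congrArg _ hgen
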